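/- Let 𝒜 ⊆ Φ be any (𝔹,Σ)-attractor of the semigroup. Then 𝒦|₀ ⊆ 𝒜, i.e. for every complete bounded trajectory u : ℝ^m → Φ one has u(0) ∈ 𝒜. (No boundedness of an attracting set and no continuity of the maps S(h) is needed for this inclusion.) -/
import Mathlib

open Metric Filter Topology

noncomputable section

/-- `K` is a `(𝔹,Σ)`-attracting set for the semigroup `S`. -/
def IsAttractingSet {m : ℕ} {Φ : Type*} [MetricSpace Φ]
    (S : EuclideanSpace ℝ (Fin m) → Φ → Φ) (Sig : Set (EuclideanSpace ℝ (Fin m)))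
    (Bor : Set (Set Φ)) (K : Set Φ) : Prop :=
  ∀ B ∈ Bor, ∀ ε : ℝ, 0 < ε → ∃ D : ℝ, 0 < D ∧
    ∀ h ∈ Sig, infDist h (frontier Sig) ≥ D → S h '' B ⊆ thickening ε K

/-- `A` is a `(𝔹,Σ)`-attractor: compact, strictly invariant and `(𝔹,Σ)`-attracting. -/
def IsAttractor {m : ℕ} {Φ : Type*} [MetricSpace Φ]
    (S : EuclideanSpace ℝ (Fin m) → Φ → Φ) (C Sig : Set (EuclideanSpace ℝ (Fin m)))
    (Bor : Set (Set Φ)) (A : Set Φ) : Prop :=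
  IsCompact A ∧ (∀ h ∈ C, S h '' A = A) ∧ IsAttractingSet S Sig Bor A

/-- `u : ℝ^m → Φ` is a complete bounded trajectory of the semigroup `S` over the cone `C`,
with respect to the bornology `Bor`. -/
def IsCompleteBoundedTrajectory {m : ℕ} {Φ : Type*} [MetricSpace Φ]
    (S : EuclideanSpace ℝ (Fin m) → Φ → Φ) (C : Set (EuclideanSpace ℝ (Fin m)))
    (Bor : Set (Set Φ)) (u : EuclideanSpace ℝ (Fin m) → Φ) : Prop :=
  (∀ h ∈ C, ∀ s, S h (u s) = u (s + h)) ∧ ∃ Bu ∈ Bor, Set.range u ⊆ Bu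

/-- For any `(𝔹,Σ)`-attractor `𝒜`, the value at time `0` of every complete bounded
trajectory belongs to `𝒜`: `𝒦|₀ ⊆ 𝒜`. -/
theorem trajectory_zero_mem_attractor
    {m : ℕ} {Φ : Type*} [MetricSpace Φ] (hm : 1 ≤ m)
    (C Sig : Set (EuclideanSpace ℝ (Fin m)))
    (S : EuclideanSpace ℝ (Fin m) → Φ → Φ) (Bor : Set (Set Φ))
    (hCclosed : IsClosed C) (hCint : (interior C).Nonempty)
    (hC0 : (0 : EuclideanSpace ℝ (Fin m)) ∈ C)
    (hCadd : ∀ h₁ ∈ C, ∀ h₂ ∈ C, h₁ + h₂ ∈ C)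
    (hCcone : ∀ t : ℝ, 0 ≤ t → ∀ h ∈ C, t • h ∈ C)
    (hS0 : S 0 = id)
    (hSadd : ∀ h₁ ∈ C, ∀ h₂ ∈ C, S (h₁ + h₂) = S h₁ ∘ S h₂)
    (hSigne : Sig.Nonempty) (hSigC : Sig ⊆ C)
    (hfr : frontier C ⊆ frontier Sig)
    (hcof : ∀ D : ℝ, 0 < D → ∃ h ∈ Sig, infDist h (frontier Sig) ≥ D)
    (A : Set Φ) (hA : IsAttractor S C Sig Bor A) :
    ∀ u : EuclideanSpace ℝ (Fin m) → Φ,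
      IsCompleteBoundedTrajectory S C Bor u → u 0 ∈ A := by
  intro u hu
  obtain ⟨htraj, Bu, hBu, hrange⟩ := hu
  obtain ⟨hAcomp, hinv, hattr⟩ := hA
  have hclosed := hAcomp.isClosed
  have key : ∀ ε : ℝ, 0 < ε → u 0 ∈ thickening ε A := by
    intro ε hε
    obtain ⟨D, hD, hDprop⟩ := hattr Bu hBu ε hε
    obtain ⟨h, hhSig, hhD⟩ := hcof D hD
    have hhC : h ∈ C := hSigC hhSig
    have heq : S h (u (-h)) = u 0 := by
      have := htraj h hhC (-h); simpa using this
    exact hDprop h hhSig hhD ⟨u (-h), hrange (Set.mem_range_self _), heq⟩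
  have hne : A.Nonempty := by
    obtain ⟨a, ha, -⟩ := mem_thickening_iff.mp (key 1 one_pos)
    exact ⟨a, ha⟩
  have h0 : infDist (u 0) A = 0 := by
    refine le_antisymm ?_ infDist_nonneg
    refine le_of_forall_pos_le_add fun ε hε => ?_
    obtain ⟨a, haA, hd⟩ := mem_thickening_iff.mp (key ε hε)
    exact le_trans (infDist_le_dist_of_mem haA) (by linarith)
  exact (hclosed.mem_iff_infDist_zero hne).mpr h0
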